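/- arXiv:1909.09615 — 5 statements merged into one kernel-verified Lean document; each statement's English description precedes it below -/
import Mathlib

section
/- Let A be a real symmetric n×n matrix. Then the Frobenius norm of A satisfies |A| = sup over all orthonormal bases (ξ¹,…,ξⁿ) of ℝⁿ of ( ∑_{i=1}^n |A ξ^i · ξ^i|² )^{1/2}, where A ξ^i · ξ^i denotes the inner product of A ξ^i with ξ^i. Equivalently, the supremum may be taken over the families of column vectors of all orthogonal matrices R ∈ O(n). -/
open scoped BigOperators Matrix

/-- The Frobenius (Euclidean) norm of a real `n × n` matrix. -/
noncomputable def frobeniusNorm {n : ℕ} (A : Matrix (Fin n) (Fin n) ℝ) : ℝ :=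
  Real.sqrt (∑ i, ∑ j, (A i j) ^ 2)

/-- A family of `n` pairwise orthogonal unit vectors in `ℝⁿ`
(hence an orthonormal basis of `ℝⁿ`). -/
def IsOrthonormalFamily {n : ℕ} (ξ : Fin n → (Fin n → ℝ)) : Prop :=
  ∀ i j, ξ i ⬝ᵥ ξ j = if i = j then (1 : ℝ) else 0

lemma sq_sum_eq_trace {n : ℕ} (M : Matrix (Fin n) (Fin n) ℝ) :
    ∑ i, ∑ j, (M i j) ^ 2 = (M * Mᵀ).trace := by
  simp [Matrix.trace, Matrix.mul_apply, Matrix.diag, sq]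

/-- Conjugating by an orthogonal matrix preserves the sum of squares of entries. -/
lemma sq_sum_conj {n : ℕ} (A R : Matrix (Fin n) (Fin n) ℝ) (hR : Rᵀ * R = 1) :
    ∑ i, ∑ j, ((Rᵀ * A * R) i j) ^ 2 = ∑ i, ∑ j, (A i j) ^ 2 := by
  have hR' : R * Rᵀ = 1 := mul_eq_one_comm.mp hR
  rw [sq_sum_eq_trace, sq_sum_eq_trace]
  have h1 : (Rᵀ * A * R) * (Rᵀ * A * R)ᵀ = Rᵀ * (A * Aᵀ) * R := by
    simp only [Matrix.transpose_mul, Matrix.transpose_transpose, Matrix.mul_assoc]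
    rw [← Matrix.mul_assoc R Rᵀ, hR', Matrix.one_mul]
  rw [h1, Matrix.trace_mul_cycle, ← Matrix.mul_assoc, hR', Matrix.one_mul]

/-- For a real symmetric matrix `A`, the Frobenius norm `|A|` equals the supremum, over all
orthonormal bases `(ξ¹, …, ξⁿ)` of `ℝⁿ`, of `(∑ i, |A ξ i ⬝ ξ i|²)^(1/2)`. -/
theorem frobenius_eq_sup_orthonormal {n : ℕ} (A : Matrix (Fin n) (Fin n) ℝ)
    (hA : A.IsSymm) :
    IsLUB {r : ℝ | ∃ ξ : Fin n → (Fin n → ℝ), IsOrthonormalFamily ξ ∧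
        r = Real.sqrt (∑ i, |A.mulVec (ξ i) ⬝ᵥ ξ i| ^ 2)}
      (frobeniusNorm A) := by
  have hH : A.IsHermitian := by
    rwa [Matrix.IsHermitian, Matrix.conjTranspose_eq_transpose_of_trivial]
  constructor
  · -- upper bound
    rintro r ⟨ξ, hξ, rfl⟩
    set R : Matrix (Fin n) (Fin n) ℝ := Matrix.of fun i j => ξ j i with hRdef
    have hR : Rᵀ * R = 1 := by
      ext i j
      simpa [Matrix.mul_apply, Matrix.one_apply, hRdef, dotProduct] using hξ i j
    have hdiag : ∀ i, (Rᵀ * A * R) i i = A.mulVec (ξ i) ⬝ᵥ ξ i := by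
      intro i
      simp only [Matrix.mul_apply, Matrix.mulVec, dotProduct, Matrix.transpose_apply,
        hRdef, Matrix.of_apply, Finset.sum_mul]
      rw [Finset.sum_comm]
      exact Finset.sum_congr rfl fun k _ => Finset.sum_congr rfl fun l _ => by ring
    have hle : ∑ i, |A.mulVec (ξ i) ⬝ᵥ ξ i| ^ 2 ≤ ∑ i, ∑ j, (A i j) ^ 2 := by
      rw [← sq_sum_conj A R hR]
      refine Finset.sum_le_sum fun i _ => ?_
      rw [sq_abs, ← hdiag i]
      exact Finset.single_le_sum (f := fun j => ((Rᵀ * A * R) i j) ^ 2)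
        (fun j _ => sq_nonneg _) (Finset.mem_univ i)
    exact Real.sqrt_le_sqrt hle
  · -- least: the Frobenius norm itself is attained (eigenbasis)
    intro b hb
    refine hb ⟨fun i => ⇑(hH.eigenvectorBasis i), ?_, ?_⟩
    · intro i j
      have := hH.eigenvectorBasis.orthonormal
      rw [orthonormal_iff_ite] at this
      have h := this i j
      rw [EuclideanSpace.inner_eq_star_dotProduct] at h
      simpa [dotProduct, mul_comm] using h
    · have hmul : ∀ i, A.mulVec ⇑(hH.eigenvectorBasis i) ⬝ᵥ ⇑(hH.eigenvectorBasis i)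
          = hH.eigenvalues i := by
        intro i
        rw [hH.mulVec_eigenvectorBasis]
        have hnorm : (⇑(hH.eigenvectorBasis i) : Fin n → ℝ) ⬝ᵥ ⇑(hH.eigenvectorBasis i) = 1 := by
          have := hH.eigenvectorBasis.orthonormal
          rw [orthonormal_iff_ite] at this
          have h := this i i
          rw [EuclideanSpace.inner_eq_star_dotProduct] at h
          simpa [dotProduct] using h
        simp [smul_dotProduct, hnorm]
      have hU : ((hH.eigenvectorUnitary : Matrix (Fin n) (Fin n) ℝ))ᵀ *
          (hH.eigenvectorUnitary : Matrix (Fin n) (Fin n) ℝ) = 1 := by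
        have := (Matrix.mem_unitaryGroup_iff'.mp hH.eigenvectorUnitary.2)
        rwa [Matrix.star_eq_conjTranspose, Matrix.conjTranspose_eq_transpose_of_trivial] at this
      have hdiagA : (hH.eigenvectorUnitary : Matrix (Fin n) (Fin n) ℝ)ᵀ * A *
          (hH.eigenvectorUnitary : Matrix (Fin n) (Fin n) ℝ)
          = Matrix.diagonal hH.eigenvalues := by
        have := hH.conjStarAlgAut_star_eigenvectorUnitary
        rw [Unitary.conjStarAlgAut_star_apply] at this
        simpa [Matrix.star_eq_conjTranspose, Matrix.conjTranspose_eq_transpose_of_trivial,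
          Function.comp_def] using this
      have hsum : ∑ i, |A.mulVec ⇑(hH.eigenvectorBasis i) ⬝ᵥ ⇑(hH.eigenvectorBasis i)| ^ 2
          = ∑ i, ∑ j, (A i j) ^ 2 := by
        rw [← sq_sum_conj A _ hU, hdiagA]
        simp only [sq_abs, hmul]
        refine Finset.sum_congr rfl fun i _ => ?_
        rw [Finset.sum_eq_single i (fun j _ hj => by simp [Matrix.diagonal_apply_ne _ (Ne.symm hj)])
          (by simp)]
        simp
      rw [frobeniusNorm, hsum]
end

section
/- Let (R_j)_{j∈ℕ} be a sequence of orthogonal n×n matrices that is dense in the orthogonal group O(n), and for each j let ξ_j¹,…,ξ_jⁿ denote the column vectors of R_j. Then for every real symmetric n×n matrix A one has |A| = sup_{j∈ℕ} ( ∑_{i=1}^n |A ξ_j^i · ξ_j^i|² )^{1/2}, where |A| is the Frobenius norm. -/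
open scoped BigOperators Matrix

/-- Let `(R j)` be a sequence of orthogonal `n × n` matrices which is dense in the orthogonal
group `O(n)`, and let `ξ_j^i := fun k => R j k i` be the columns of `R j`.  Then for every real
symmetric matrix `A`, the Frobenius norm `|A|` is the supremum over `j ∈ ℕ` of
`(∑ i, |A ξ_j^i ⬝ ξ_j^i|²)^(1/2)`. -/
theorem frobenius_eq_sup_dense_rotations {n : ℕ}
    (R : ℕ → Matrix (Fin n) (Fin n) ℝ)
    (hR : ∀ j, R j * (R j)ᵀ = 1)
    (hdense : ∀ M : Matrix (Fin n) (Fin n) ℝ, M * Mᵀ = 1 → M ∈ closure (Set.range R))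
    (A : Matrix (Fin n) (Fin n) ℝ) (hA : A.IsSymm) :
    IsLUB
      (Set.range fun j : ℕ =>
        Real.sqrt (∑ i, |A.mulVec (fun k => R j k i) ⬝ᵥ (fun k => R j k i)| ^ 2))
      (frobeniusNorm A) := by
  set g : Matrix (Fin n) (Fin n) ℝ → ℝ := fun M =>
    Real.sqrt (∑ i, |A.mulVec (fun k => M k i) ⬝ᵥ (fun k => M k i)| ^ 2) with hgdef
  -- per-entry identity
  have hq : ∀ (M : Matrix (Fin n) (Fin n) ℝ) (i : Fin n),
      A.mulVec (fun k => M k i) ⬝ᵥ (fun k => M k i) = (Mᵀ * A * M) i i := by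
    intro M i
    simp only [Matrix.mul_apply, Matrix.mulVec, dotProduct, Matrix.transpose_apply,
      Finset.sum_mul, Finset.mul_sum]
    rw [Finset.sum_comm]
    congr 1; ext j; congr 1; ext k; ring
  have hfr : ∀ B : Matrix (Fin n) (Fin n) ℝ, ∑ i, ∑ j, (B i j)^2 = (B * Bᵀ).trace := by
    intro B; simp [Matrix.trace, Matrix.mul_apply, sq]
  -- Frobenius invariance under orthogonal conjugation
  have hinv : ∀ M : Matrix (Fin n) (Fin n) ℝ, M * Mᵀ = 1 →
      ∑ i, ∑ j, ((Mᵀ * A * M) i j)^2 = ∑ i, ∑ j, (A i j)^2 := by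
    intro M hM
    rw [hfr, hfr]
    have key : (Mᵀ * A * M) * (Mᵀ * A * M)ᵀ = Mᵀ * (A * Aᵀ) * M := by
      simp only [Matrix.transpose_mul, Matrix.transpose_transpose, Matrix.mul_assoc]
      rw [← Matrix.mul_assoc M Mᵀ, hM, Matrix.one_mul]
    rw [key, Matrix.trace_mul_comm, ← Matrix.mul_assoc, ← Matrix.mul_assoc, hM, Matrix.one_mul]
  -- upper bound
  have hub : ∀ M : Matrix (Fin n) (Fin n) ℝ, M * Mᵀ = 1 → g M ≤ frobeniusNorm A := by
    intro M hM
    apply Real.sqrt_le_sqrt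
    rw [← hinv M hM]
    calc ∑ i, |A.mulVec (fun k => M k i) ⬝ᵥ (fun k => M k i)| ^ 2
        = ∑ i, ((Mᵀ * A * M) i i) ^ 2 := by
          refine Finset.sum_congr rfl fun i _ => ?_; rw [hq, sq_abs]
      _ ≤ ∑ i, ∑ j, ((Mᵀ * A * M) i j)^2 := by
          refine Finset.sum_le_sum fun i _ => ?_
          exact Finset.single_le_sum (f := fun j => ((Mᵀ * A * M) i j)^2) (fun j _ => sq_nonneg _) (Finset.mem_univ i)
  -- continuity of g
  have hcont : Continuous g := by
    rw [hgdef]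
    simp only [dotProduct, Matrix.mulVec]
    fun_prop
  -- diagonalizing matrix
  have hAH : A.IsHermitian := by
    rwa [Matrix.IsHermitian, Matrix.conjTranspose_eq_transpose_of_trivial]
  set M : Matrix (Fin n) (Fin n) ℝ := (hAH.eigenvectorUnitary : Matrix (Fin n) (Fin n) ℝ)
    with hMdef
  have hstar : star M = Mᵀ := by
    rw [Matrix.star_eq_conjTranspose, Matrix.conjTranspose_eq_transpose_of_trivial]
  have hMorth : M * Mᵀ = 1 := by
    rw [← hstar]
    exact (Matrix.mem_unitaryGroup_iff.mp hAH.eigenvectorUnitary.2)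
  have hdiag : Mᵀ * A * M = Matrix.diagonal (RCLike.ofReal ∘ hAH.eigenvalues) := by
    rw [← hstar]
    have h := hAH.conjStarAlgAut_star_eigenvectorUnitary
    rwa [Unitary.conjStarAlgAut_star_apply] at h
  have hgM : g M = frobeniusNorm A := by
    have hdsum : ∑ i, ((Mᵀ * A * M) i i) ^ 2 = ∑ i, ∑ j, ((Mᵀ * A * M) i j)^2 := by
      refine Finset.sum_congr rfl fun i _ => ?_
      rw [Finset.sum_eq_single i]
      · intro j _ hj
        rw [hdiag]
        simp [Matrix.diagonal_apply_ne' _ (by exact hj)]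
      · intro h; exact absurd (Finset.mem_univ i) h
    show Real.sqrt _ = _
    unfold frobeniusNorm
    congr 1
    calc ∑ i, |A.mulVec (fun k => M k i) ⬝ᵥ (fun k => M k i)| ^ 2
        = ∑ i, ((Mᵀ * A * M) i i) ^ 2 := by
          refine Finset.sum_congr rfl fun i _ => ?_; rw [hq, sq_abs]
      _ = ∑ i, ∑ j, ((Mᵀ * A * M) i j)^2 := hdsum
      _ = ∑ i, ∑ j, (A i j)^2 := hinv M hMorth
  constructor
  · rintro x ⟨j, rfl⟩
    exact hub (R j) (hR j)
  · intro b hb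
    have hMcl := hdense M hMorth
    have hsub : closure (Set.range R) ⊆ {x | g x ≤ b} := by
      refine closure_minimal ?_ (isClosed_le hcont continuous_const)
      rintro x ⟨j, rfl⟩
      exact hb ⟨j, rfl⟩
    calc frobeniusNorm A = g M := hgM.symm
      _ ≤ b := hsub hMcl
end

section
/- Let q ∈ (1,∞) and let A be a real symmetric n×n matrix with eigenvalues λ₁,…,λ_n (repeated according to multiplicity). Then sup over all orthonormal bases (ξ¹,…,ξⁿ) of ℝⁿ of ∑_{i=1}^n |A ξ^i · ξ^i|^q equals ∑_{i=1}^n |λ_i|^q; that is, the q-Schatten norm H(A) = (∑_i |λ_i|^q)^{1/q} satisfies H(A)^q = sup_{(ξ¹,…,ξⁿ)} ∑_{i=1}^n |A ξ^i · ξ^i|^q. -/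
open scoped BigOperators Matrix

lemma convexOn_abs_rpow {q : ℝ} (hq : 1 ≤ q) :
    ConvexOn ℝ Set.univ (fun x : ℝ => |x| ^ q) := by
  have himg : (abs '' (Set.univ : Set ℝ)) = Set.Ici 0 := by
    ext x
    constructor
    · rintro ⟨y, -, rfl⟩; exact abs_nonneg y
    · intro hx; exact ⟨x, trivial, abs_of_nonneg hx⟩
  have habs : ConvexOn ℝ (Set.univ : Set ℝ) (abs : ℝ → ℝ) := by
    rw [show (abs : ℝ → ℝ) = norm from funext fun x => (Real.norm_eq_abs x).symm]
    exact convexOn_univ_norm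
  have hrpow : ConvexOn ℝ (abs '' (Set.univ : Set ℝ)) (fun x : ℝ => x ^ q) := by
    rw [himg]; exact convexOn_rpow hq
  have hmono : MonotoneOn (fun x : ℝ => x ^ q) (abs '' (Set.univ : Set ℝ)) := by
    rw [himg]
    intro x hx y _ hxy
    exact Real.rpow_le_rpow hx hxy (by linarith)
  exact hrpow.comp habs hmono

/-- Key inequality: if `C` is an orthogonal matrix, then
`∑ i, |∑ j, lam j * C i j ^ 2| ^ q ≤ ∑ j, |lam j| ^ q`. -/
lemma key_ineq {n : ℕ} {q : ℝ} (hq : 1 < q) (lam : Fin n → ℝ)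
    (C : Matrix (Fin n) (Fin n) ℝ) (h1 : C * Cᵀ = 1) (h2 : Cᵀ * C = 1) :
    ∑ i, |∑ j, lam j * C i j ^ 2| ^ q ≤ ∑ i, |lam i| ^ q := by
  have hrow : ∀ i, ∑ j, C i j ^ 2 = 1 := by
    intro i
    have := congrFun (congrFun h1 i) i
    simpa [Matrix.mul_apply, Matrix.one_apply, sq] using this
  have hcol : ∀ j, ∑ i, C i j ^ 2 = 1 := by
    intro j
    have := congrFun (congrFun h2 j) j
    simpa [Matrix.mul_apply, Matrix.one_apply, sq] using this
  have hconv := convexOn_abs_rpow hq.le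
  calc ∑ i, |∑ j, lam j * C i j ^ 2| ^ q
      ≤ ∑ i, ∑ j, C i j ^ 2 * |lam j| ^ q := by
        apply Finset.sum_le_sum
        intro i _
        have := hconv.map_sum_le (t := Finset.univ) (w := fun j => C i j ^ 2)
          (p := lam) (fun j _ => sq_nonneg _) (hrow i) (fun j _ => trivial)
        simpa [smul_eq_mul, mul_comm] using this
    _ = ∑ i, |lam i| ^ q := by
        rw [Finset.sum_comm]
        refine Finset.sum_congr rfl fun j _ => ?_
        rw [← Finset.sum_mul, hcol j, one_mul]

/-- Let `q ∈ (1, ∞)` and let `A` be a real symmetric `n × n` matrix with eigenvalues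
`λ₁, …, λ_n` (repeated according to multiplicity, with a corresponding orthonormal basis of
eigenvectors `ev`).  Then the supremum over all orthonormal bases `(ξ¹, …, ξⁿ)` of `ℝⁿ` of
`∑ i, |A ξ i ⬝ ξ i|^q` equals `∑ i, |λ i|^q`, i.e. the `q`-th power of the `q`-Schatten norm. -/
theorem schatten_pow_eq_sup_orthonormal {n : ℕ} (q : ℝ) (hq : 1 < q)
    (A : Matrix (Fin n) (Fin n) ℝ) (hA : A.IsSymm)
    (lam : Fin n → ℝ) (ev : Fin n → (Fin n → ℝ))
    (hev : IsOrthonormalFamily ev)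
    (heig : ∀ i, A.mulVec (ev i) = lam i • ev i) :
    IsLUB {r : ℝ | ∃ ξ : Fin n → (Fin n → ℝ), IsOrthonormalFamily ξ ∧
        r = ∑ i, |A.mulVec (ξ i) ⬝ᵥ ξ i| ^ q}
      (∑ i, |lam i| ^ q) := by
  constructor
  · -- upper bound
    rintro r ⟨ξ, hξ, rfl⟩
    set X : Matrix (Fin n) (Fin n) ℝ := Matrix.of ξ with hXdef
    set E : Matrix (Fin n) (Fin n) ℝ := Matrix.of ev with hEdef
    have hX : X * Xᵀ = 1 := by
      ext i k
      have := hξ i k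
      simpa [Matrix.mul_apply, dotProduct, Matrix.one_apply, hXdef] using this
    have hE : E * Eᵀ = 1 := by
      ext i k
      have := hev i k
      simpa [Matrix.mul_apply, dotProduct, Matrix.one_apply, hEdef] using this
    have hE' : Eᵀ * E = 1 := mul_eq_one_comm.mp hE
    set C : Matrix (Fin n) (Fin n) ℝ := X * Eᵀ with hCdef
    have hC1 : C * Cᵀ = 1 := by
      rw [hCdef, Matrix.transpose_mul, Matrix.transpose_transpose,
        Matrix.mul_assoc, ← Matrix.mul_assoc Eᵀ, hE', Matrix.one_mul, hX]
    have hC2 : Cᵀ * C = 1 := mul_eq_one_comm.mp hC1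
    have hCE : C * E = X := by
      rw [hCdef, Matrix.mul_assoc, hE', Matrix.mul_one]
    have hEA : E * A = Matrix.diagonal lam * E := by
      ext i k
      have h1 := congrFun (heig i) k
      simp only [Matrix.mulVec, dotProduct, Pi.smul_apply, smul_eq_mul] at h1
      rw [Matrix.mul_apply, Matrix.diagonal_mul]
      simp only [hEdef, Matrix.of_apply]
      calc ∑ j, ev i j * A j k = ∑ j, A k j * ev i j := by
            refine Finset.sum_congr rfl fun j _ => ?_
            rw [hA.apply, mul_comm]
      _ = lam i * ev i k := h1
    have hB : X * A * Xᵀ = C * Matrix.diagonal lam * Cᵀ := by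
      have hmid : Matrix.diagonal lam * E * (Eᵀ * Cᵀ) = Matrix.diagonal lam * Cᵀ := by
        rw [Matrix.mul_assoc (Matrix.diagonal lam) E, ← Matrix.mul_assoc E Eᵀ, hE,
          Matrix.one_mul]
      rw [← hCE, Matrix.transpose_mul, Matrix.mul_assoc C E A, hEA,
        Matrix.mul_assoc C (Matrix.diagonal lam * E), hmid, ← Matrix.mul_assoc]
    have hdiag : ∀ i, A.mulVec (ξ i) ⬝ᵥ ξ i = ∑ j, lam j * C i j ^ 2 := by
      intro i
      have h1 : A.mulVec (ξ i) ⬝ᵥ ξ i = (X * A * Xᵀ) i i := by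
        simp only [Matrix.mul_apply, Matrix.mulVec, dotProduct,
          Matrix.transpose_apply, hXdef, Matrix.of_apply]
        refine Finset.sum_congr rfl fun k _ => ?_
        congr 1
        refine Finset.sum_congr rfl fun j _ => ?_
        rw [hA.apply k j, mul_comm]
      rw [h1, hB]
      conv_lhs => rw [Matrix.mul_apply]
      simp only [Matrix.mul_diagonal, Matrix.transpose_apply]
      refine Finset.sum_congr rfl fun j _ => ?_
      ring
    calc ∑ i, |A.mulVec (ξ i) ⬝ᵥ ξ i| ^ q
        = ∑ i, |∑ j, lam j * C i j ^ 2| ^ q := by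
          refine Finset.sum_congr rfl fun i _ => ?_
          rw [hdiag i]
      _ ≤ ∑ i, |lam i| ^ q := key_ineq hq lam C hC1 hC2
  · -- least upper bound
    intro b hb
    refine hb ⟨ev, hev, ?_⟩
    refine Finset.sum_congr rfl fun i _ => ?_
    rw [heig i, smul_dotProduct, hev i i]
    simp
end

section
/- (Localization lemma, part 1.) Let Ω ⊆ ℝⁿ be open, let Λ be a [0,+∞]-valued function defined on the family of open subsets of Ω which is superadditive on open sets with disjoint compact closures (i.e. Λ(A) ≥ Λ(A₁) + Λ(A₂) whenever A₁, A₂ are open sets with disjoint compact closures contained in the open set A ⊆ Ω), let λ be a positive Borel measure on Ω, and let φ_j : Ω → [0,+∞], j ∈ ℕ, be Borel functions such that ∫_K φ_j dλ ≤ Λ(A) for every open set A ⊆ Ω, every compact set K ⊆ A, and every j ∈ ℕ. Then ∫_K sup_{j∈ℕ} φ_j dλ ≤ Λ(A) for every open set A ⊆ Ω and every compact set K ⊆ A. -/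
open MeasureTheory
open scoped BigOperators ENNReal

/-- Separation of two disjoint compacts inside an open set by open sets with
disjoint compact closures. -/
lemma exists_sep_opens {n : ℕ} (A C₁ C₂ : Set (Fin n → ℝ)) (hA : IsOpen A)
    (h1 : IsCompact C₁) (h2 : IsCompact C₂) (h1A : C₁ ⊆ A) (h2A : C₂ ⊆ A)
    (hd : Disjoint C₁ C₂) :
    ∃ A₁ A₂ : Set (Fin n → ℝ), IsOpen A₁ ∧ IsOpen A₂ ∧ C₁ ⊆ A₁ ∧ C₂ ⊆ A₂ ∧
      A₁ ⊆ A ∧ A₂ ⊆ A ∧ IsCompact (closure A₁) ∧ IsCompact (closure A₂) ∧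
      Disjoint (closure A₁) (closure A₂) := by
  obtain ⟨U₁, U₂, hU₁, hU₂, hC₁U₁, hC₂U₂, hUd⟩ :=
    SeparatedNhds.of_isCompact_isCompact h1 h2 hd
  obtain ⟨L₁, hL₁, hC₁L₁, hL₁sub⟩ :=
    exists_compact_between h1 (hA.inter hU₁) (Set.subset_inter h1A hC₁U₁)
  obtain ⟨L₂, hL₂, hC₂L₂, hL₂sub⟩ :=
    exists_compact_between h2 (hA.inter hU₂) (Set.subset_inter h2A hC₂U₂)
  obtain ⟨A₁, hA₁o, hC₁A₁, hclA₁⟩ :=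
    normal_exists_closure_subset h1.isClosed isOpen_interior hC₁L₁
  obtain ⟨A₂, hA₂o, hC₂A₂, hclA₂⟩ :=
    normal_exists_closure_subset h2.isClosed isOpen_interior hC₂L₂
  have hclA₁L : closure A₁ ⊆ L₁ := hclA₁.trans interior_subset
  have hclA₂L : closure A₂ ⊆ L₂ := hclA₂.trans interior_subset
  refine ⟨A₁, A₂, hA₁o, hA₂o, hC₁A₁, hC₂A₂, ?_, ?_, ?_, ?_, ?_⟩
  · exact (subset_closure.trans hclA₁L).trans (hL₁sub.trans Set.inter_subset_left)
  · exact (subset_closure.trans hclA₂L).trans (hL₂sub.trans Set.inter_subset_left)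
  · exact hL₁.of_isClosed_subset isClosed_closure hclA₁L
  · exact hL₂.of_isClosed_subset isClosed_closure hclA₂L
  · exact hUd.mono (hclA₁L.trans (hL₁sub.trans Set.inter_subset_right))
      (hclA₂L.trans (hL₂sub.trans Set.inter_subset_right))

/-- Localization lemma, part 1 (cf. Braides, Lemma 15.2).  Let `Ω ⊆ ℝⁿ` be open, let `Λ` be a
`[0, +∞]`-valued set function on subsets of `Ω` which is superadditive on open sets with
disjoint compact closures, let `μ` be a positive Borel measure, and let `φ j` be nonnegative
Borel functions with `∫_K φ j dμ ≤ Λ A` for all open `A ⊆ Ω`, compact `K ⊆ A` and all `j`.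
Then `∫_K (⨆ j, φ j) dμ ≤ Λ A` for all open `A ⊆ Ω` and compact `K ⊆ A`. -/
theorem localization_sup_le {n : ℕ} (Ω : Set (Fin n → ℝ)) (hΩ : IsOpen Ω)
    (Λ : Set (Fin n → ℝ) → ℝ≥0∞)
    (hsuper : ∀ A A₁ A₂ : Set (Fin n → ℝ), IsOpen A → A ⊆ Ω →
      IsOpen A₁ → IsOpen A₂ → A₁ ⊆ A → A₂ ⊆ A →
      IsCompact (closure A₁) → IsCompact (closure A₂) →
      Disjoint (closure A₁) (closure A₂) → Λ A₁ + Λ A₂ ≤ Λ A)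
    (μ : Measure (Fin n → ℝ))
    (φ : ℕ → (Fin n → ℝ) → ℝ≥0∞) (hφ : ∀ j, Measurable (φ j))
    (hbound : ∀ (A K : Set (Fin n → ℝ)), IsOpen A → A ⊆ Ω → IsCompact K → K ⊆ A →
      ∀ j, ∫⁻ x in K, φ j x ∂μ ≤ Λ A) :
    ∀ (A K : Set (Fin n → ℝ)), IsOpen A → A ⊆ Ω → IsCompact K → K ⊆ A →
      ∫⁻ x in K, ⨆ j, φ j x ∂μ ≤ Λ A := by
  -- the finite suprema
  set g : ℕ → (Fin n → ℝ) → ℝ≥0∞ := fun m x => (Finset.range (m + 1)).sup fun j => φ j x with hg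
  have hgsucc : ∀ m x, g (m + 1) x = g m x ⊔ φ (m + 1) x := by
    intro m x
    simp [hg, Finset.range_add_one, sup_comm]
  have hgmeas : ∀ m, Measurable (g m) := by
    intro m
    induction m with
    | zero => simpa [hg] using hφ 0
    | succ m ih =>
        have : g (m + 1) = fun x => g m x ⊔ φ (m + 1) x := funext fun x => hgsucc m x
        rw [this]
        exact ih.sup (hφ (m + 1))
  have hgmono : Monotone g := by
    intro a b hab x
    exact Finset.sup_mono (Finset.range_subset_range.2 (by omega))
  -- key claim for finite suprema, by induction
  have key : ∀ m, ∀ (A K : Set (Fin n → ℝ)), IsOpen A → A ⊆ Ω → IsCompact K → K ⊆ A →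
      ∫⁻ x in K, g m x ∂μ ≤ Λ A := by
    intro m
    induction m with
    | zero =>
        intro A K hA hAΩ hK hKA
        have : ∀ x, g 0 x = φ 0 x := by intro x; simp [hg]
        simp only [this]
        exact hbound A K hA hAΩ hK hKA 0
    | succ m ih =>
        intro A K hA hAΩ hK hKA
        by_cases hΛtop : Λ A = ∞
        · simp [hΛtop]
        -- split K according to whether φ (m+1) ≤ g m
        set E : Set (Fin n → ℝ) := {x | φ (m + 1) x ≤ g m x} with hE
        have hEmeas : MeasurableSet E := measurableSet_le (hφ (m + 1)) (hgmeas m)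
        have hKmeas : MeasurableSet K := hK.isClosed.measurableSet
        have hKEmeas : MeasurableSet (K ∩ E) := hKmeas.inter hEmeas
        have hKEmeas' : MeasurableSet (K \ E) := hKmeas.diff hEmeas
        have hsplit : ∫⁻ x in K, g (m + 1) x ∂μ
            = ∫⁻ x in K ∩ E, g m x ∂μ + ∫⁻ x in K \ E, φ (m + 1) x ∂μ := by
          have h1 : ∫⁻ x in K, g (m + 1) x ∂μ
              = ∫⁻ x in K ∩ E, g (m + 1) x ∂μ + ∫⁻ x in K \ E, g (m + 1) x ∂μ := by
            rw [← lintegral_inter_add_diff (hB := hEmeas)]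
          have h2 : ∫⁻ x in K ∩ E, g (m + 1) x ∂μ = ∫⁻ x in K ∩ E, g m x ∂μ := by
            refine setLIntegral_congr_fun hKEmeas ?_
            intro x hx
            rcases hx with ⟨_, hxE⟩
            rw [hgsucc]
            exact sup_eq_left.2 hxE
          have h3 : ∫⁻ x in K \ E, g (m + 1) x ∂μ = ∫⁻ x in K \ E, φ (m + 1) x ∂μ := by
            refine setLIntegral_congr_fun hKEmeas' ?_
            intro x hx
            rcases hx with ⟨_, hxE⟩
            rw [hgsucc]
            exact sup_eq_right.2 (le_of_not_ge hxE)
          rw [h1, h2, h3]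
        rw [hsplit]
        -- bound the two pieces up to ε
        refine ENNReal.le_of_forall_pos_le_add fun ε hε hΛlt => ?_
        have hεhalf : (ε : ℝ≥0∞) / 2 ≠ 0 := by
          simp [ENNReal.div_eq_zero_iff, hε.ne']
        -- inner regularity for the first piece
        set ν₁ : Measure (Fin n → ℝ) := (μ.restrict (K ∩ E)).withDensity (g m) with hν₁
        have hν₁fin : IsFiniteMeasure ν₁ := by
          refine isFiniteMeasure_withDensity ?_
          have h1 : ∫⁻ x in K ∩ E, g m x ∂μ ≤ ∫⁻ x in K, g m x ∂μ :=
            lintegral_mono_set Set.inter_subset_left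
          exact ((h1.trans (ih A K hA hAΩ hK hKA)).trans_lt hΛlt).ne
        have hν₁app : ∀ S : Set (Fin n → ℝ), MeasurableSet S → S ⊆ K ∩ E →
            ν₁ S = ∫⁻ x in S, g m x ∂μ := by
          intro S hS hSsub
          rw [hν₁, withDensity_apply _ hS, Measure.restrict_restrict hS,
            Set.inter_eq_self_of_subset_left hSsub]
        obtain ⟨C₁, hC₁sub, hC₁cpt, hC₁small⟩ :=
          hKEmeas.exists_isCompact_diff_lt (measure_ne_top ν₁ _) hεhalf
        -- inner regularity for the second piece
        set ν₂ : Measure (Fin n → ℝ) := (μ.restrict (K \ E)).withDensity (φ (m + 1)) with hν₂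
        have hν₂fin : IsFiniteMeasure ν₂ := by
          refine isFiniteMeasure_withDensity ?_
          have h1 : ∫⁻ x in K \ E, φ (m + 1) x ∂μ ≤ ∫⁻ x in K, φ (m + 1) x ∂μ :=
            lintegral_mono_set Set.diff_subset
          exact ((h1.trans (hbound A K hA hAΩ hK hKA (m + 1))).trans_lt hΛlt).ne
        have hν₂app : ∀ S : Set (Fin n → ℝ), MeasurableSet S → S ⊆ K \ E →
            ν₂ S = ∫⁻ x in S, φ (m + 1) x ∂μ := by
          intro S hS hSsub
          rw [hν₂, withDensity_apply _ hS, Measure.restrict_restrict hS,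
            Set.inter_eq_self_of_subset_left hSsub]
        obtain ⟨C₂, hC₂sub, hC₂cpt, hC₂small⟩ :=
          hKEmeas'.exists_isCompact_diff_lt (measure_ne_top ν₂ _) hεhalf
        -- approximate the integrals by the compacts
        have happrox₁ : ∫⁻ x in K ∩ E, g m x ∂μ ≤ ∫⁻ x in C₁, g m x ∂μ + ε / 2 := by
          have hsplit₁ : ∫⁻ x in K ∩ E, g m x ∂μ
              = ∫⁻ x in C₁, g m x ∂μ + ∫⁻ x in (K ∩ E) \ C₁, g m x ∂μ := by
            rw [← lintegral_inter_add_diff (hB := hC₁cpt.isClosed.measurableSet),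
              Set.inter_eq_self_of_subset_right hC₁sub]
          rw [hsplit₁]
          refine add_le_add le_rfl ?_
          rw [← hν₁app _ (hKEmeas.diff hC₁cpt.isClosed.measurableSet) Set.diff_subset]
          exact hC₁small.le
        have happrox₂ : ∫⁻ x in K \ E, φ (m + 1) x ∂μ ≤ ∫⁻ x in C₂, φ (m + 1) x ∂μ + ε / 2 := by
          have hsplit₂ : ∫⁻ x in K \ E, φ (m + 1) x ∂μ
              = ∫⁻ x in C₂, φ (m + 1) x ∂μ + ∫⁻ x in (K \ E) \ C₂, φ (m + 1) x ∂μ := by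
            rw [← lintegral_inter_add_diff (hB := hC₂cpt.isClosed.measurableSet),
              Set.inter_eq_self_of_subset_right hC₂sub]
          rw [hsplit₂]
          refine add_le_add le_rfl ?_
          rw [← hν₂app _ (hKEmeas'.diff hC₂cpt.isClosed.measurableSet) Set.diff_subset]
          exact hC₂small.le
        -- separate the compacts
        have hC₁A : C₁ ⊆ A := hC₁sub.trans (Set.inter_subset_left.trans hKA)
        have hC₂A : C₂ ⊆ A := hC₂sub.trans (Set.diff_subset.trans hKA)
        have hdisj : Disjoint C₁ C₂ := by
          refine Set.disjoint_left.2 fun x hx₁ hx₂ => ?_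
          exact (hC₂sub hx₂).2 (hC₁sub hx₁).2
        obtain ⟨A₁, A₂, hA₁o, hA₂o, hC₁A₁, hC₂A₂, hA₁A, hA₂A, hclA₁, hclA₂, hcld⟩ :=
          exists_sep_opens A C₁ C₂ hA hC₁cpt hC₂cpt hC₁A hC₂A hdisj
        -- conclude
        have hb₁ : ∫⁻ x in C₁, g m x ∂μ ≤ Λ A₁ :=
          ih A₁ C₁ hA₁o (hA₁A.trans hAΩ) hC₁cpt hC₁A₁
        have hb₂ : ∫⁻ x in C₂, φ (m + 1) x ∂μ ≤ Λ A₂ :=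
          hbound A₂ C₂ hA₂o (hA₂A.trans hAΩ) hC₂cpt hC₂A₂ (m + 1)
        calc ∫⁻ x in K ∩ E, g m x ∂μ + ∫⁻ x in K \ E, φ (m + 1) x ∂μ
            ≤ (∫⁻ x in C₁, g m x ∂μ + ε / 2) + (∫⁻ x in C₂, φ (m + 1) x ∂μ + ε / 2) :=
              add_le_add happrox₁ happrox₂
          _ = (∫⁻ x in C₁, g m x ∂μ + ∫⁻ x in C₂, φ (m + 1) x ∂μ) + (ε / 2 + ε / 2) := by
              ring
          _ ≤ (Λ A₁ + Λ A₂) + ε := by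
              rw [ENNReal.add_halves]
              exact add_le_add (add_le_add hb₁ hb₂) le_rfl
          _ ≤ Λ A + ε :=
              add_le_add (hsuper A A₁ A₂ hA hAΩ hA₁o hA₂o hA₁A hA₂A hclA₁ hclA₂ hcld) le_rfl
  -- pass to the limit
  intro A K hA hAΩ hK hKA
  have hsup : ∀ x, ⨆ j, φ j x = ⨆ m, g m x := by
    intro x
    refine le_antisymm (iSup_le fun j => ?_) (iSup_le fun m => ?_)
    · refine le_iSup_of_le j ?_
      exact Finset.le_sup (f := fun j => φ j x) (Finset.self_mem_range_succ j)
    · exact Finset.sup_le fun j hj => le_iSup (fun j => φ j x) j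
  calc ∫⁻ x in K, ⨆ j, φ j x ∂μ = ∫⁻ x in K, ⨆ m, g m x ∂μ := by
        exact lintegral_congr fun x => hsup x
    _ = ⨆ m, ∫⁻ x in K, g m x ∂μ :=
        lintegral_iSup (fun m => hgmeas m) (fun a b hab x => hgmono hab x)
    _ ≤ Λ A := iSup_le fun m => key m A K hA hAΩ hK hKA
end

section
/- (Localization lemma, part 2.) Let Ω ⊆ ℝⁿ be open, let λ be a positive Borel measure on Ω which is finite on compact sets, and let φ_j : Ω → [0,+∞], j ∈ ℕ, be Borel functions. Let A ⊆ Ω be an open set and K ⊆ A a compact set such that ∫_K sup_{j∈ℕ} φ_j dλ < +∞. Then ∫_K sup_{j∈ℕ} φ_j dλ = sup { ∑_{j=1}^r ∫_{K_j} φ_j dλ : r ∈ ℕ, K₁,…,K_r pairwise disjoint compact subsets of K }. -/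
open MeasureTheory
open scoped BigOperators ENNReal

/-- Localization lemma, part 2 (cf. Braides, Lemma 15.2).  Let `Ω ⊆ ℝⁿ` be open, let `μ` be a
positive Borel measure finite on compact sets, and let `φ j` be nonnegative Borel functions.
If `A ⊆ Ω` is open, `K ⊆ A` is compact, and `∫_K (⨆ j, φ j) dμ < ∞`, then
`∫_K (⨆ j, φ j) dμ` equals the supremum of `∑_{j < r} ∫_{K_j} φ j dμ` over all finite families
`K_0, …, K_{r-1}` of pairwise disjoint compact subsets of `K`. -/
theorem localization_sup_eq {n : ℕ} (Ω : Set (Fin n → ℝ)) (hΩ : IsOpen Ω)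
    (μ : Measure (Fin n → ℝ)) [IsFiniteMeasureOnCompacts μ]
    (φ : ℕ → (Fin n → ℝ) → ℝ≥0∞) (hφ : ∀ j, Measurable (φ j))
    (A K : Set (Fin n → ℝ)) (hA : IsOpen A) (hAΩ : A ⊆ Ω)
    (hK : IsCompact K) (hKA : K ⊆ A)
    (hfin : ∫⁻ x in K, ⨆ j, φ j x ∂μ < ⊤) :
    ∫⁻ x in K, ⨆ j, φ j x ∂μ =
      sSup {s : ℝ≥0∞ | ∃ (r : ℕ) (Ks : Fin r → Set (Fin n → ℝ)),
        (∀ j, IsCompact (Ks j)) ∧ (∀ j, Ks j ⊆ K) ∧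
        (Pairwise fun i j => Disjoint (Ks i) (Ks j)) ∧
        s = ∑ j : Fin r, ∫⁻ x in Ks j, φ j.val x ∂μ} := by
  classical
  set S : Set ℝ≥0∞ := {s : ℝ≥0∞ | ∃ (r : ℕ) (Ks : Fin r → Set (Fin n → ℝ)),
        (∀ j, IsCompact (Ks j)) ∧ (∀ j, Ks j ⊆ K) ∧
        (Pairwise fun i j => Disjoint (Ks i) (Ks j)) ∧
        s = ∑ j : Fin r, ∫⁻ x in Ks j, φ j.val x ∂μ} with hS
  -- the `≥` direction
  have hge : sSup S ≤ ∫⁻ x in K, ⨆ j, φ j x ∂μ := by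
    apply sSup_le
    rintro s ⟨r, Ks, hKsc, hKsK, hdisj, rfl⟩
    have hmeas : ∀ j : Fin r, MeasurableSet (Ks j) := fun j => (hKsc j).measurableSet
    calc ∑ j : Fin r, ∫⁻ x in Ks j, φ j.val x ∂μ
        ≤ ∑ j : Fin r, ∫⁻ x in Ks j, (⨆ i, φ i x) ∂μ := by
          exact Finset.sum_le_sum fun j _ => lintegral_mono fun x => le_iSup (fun i => φ i x) j.val
      _ = ∫⁻ x in ⋃ j : Fin r, Ks j, (⨆ i, φ i x) ∂μ := by
          rw [lintegral_iUnion hmeas hdisj, tsum_fintype]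
      _ ≤ ∫⁻ x in K, ⨆ i, φ i x ∂μ :=
          lintegral_mono_set (Set.iUnion_subset hKsK)
  -- the partial suprema
  set ψ : ℕ → (Fin n → ℝ) → ℝ≥0∞ := fun r x => (Finset.range r).sup fun j => φ j x with hψ
  have hψm : ∀ r, Measurable (ψ r) := by
    intro r
    have : ψ r = fun x => ⨆ j ∈ Finset.range r, φ j x := by
      funext x; rw [hψ]; exact Finset.sup_eq_iSup _ _
    rw [this]
    exact Measurable.iSup fun j => Measurable.iSup fun _ => hφ j
  have hψmono : Monotone ψ := fun r r' hrr' x =>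
    Finset.sup_mono (Finset.range_mono hrr')
  have hψsup : ∀ x, (⨆ j, φ j x) = ⨆ r, ψ r x := by
    intro x
    apply le_antisymm
    · refine iSup_le fun j => le_iSup_of_le (j + 1) ?_
      rw [hψ]
      exact Finset.le_sup (f := fun i => φ i x) (Finset.mem_range.2 (Nat.lt_succ_self j))
    · exact iSup_le fun r => Finset.sup_le fun j _ => le_iSup (fun i => φ i x) j
  have hψle : ∀ r x, ψ r x ≤ ⨆ j, φ j x := fun r x =>
    Finset.sup_le fun j _ => le_iSup (fun i => φ i x) j
  -- the `≤` direction
  have hle : ∫⁻ x in K, ⨆ j, φ j x ∂μ ≤ sSup S := by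
    have hrw : ∫⁻ x in K, ⨆ j, φ j x ∂μ = ⨆ r, ∫⁻ x in K, ψ r x ∂μ := by
      rw [lintegral_congr hψsup]
      exact lintegral_iSup hψm hψmono
    rw [hrw]
    refine iSup_le fun r => ?_
    rcases Nat.eq_zero_or_pos r with hr | hr
    · subst hr
      simp [hψ]
    -- fix r > 0; build the measurable partition of K
    have hfinr : ∫⁻ x in K, ψ r x ∂μ ≠ ⊤ :=
      ((lintegral_mono fun x => hψle r x).trans_lt hfin).ne
    set E : ℕ → Set (Fin n → ℝ) := fun j => {x | ψ r x ≤ φ j x} with hE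
    have hEm : ∀ j, MeasurableSet (E j) := fun j => measurableSet_le (hψm r) (hφ j)
    set B : Fin r → Set (Fin n → ℝ) :=
      fun j => (K ∩ E j.val) \ ⋃ i ∈ Finset.range j.val, E i with hB
    have hBm : ∀ j, MeasurableSet (B j) := fun j =>
      ((hK.measurableSet.inter (hEm j.val)).diff
        (Finset.measurableSet_biUnion _ fun i _ => hEm i))
    have hBK : ∀ j, B j ⊆ K := fun j x hx => hx.1.1
    have hBlt : ∀ i j : Fin r, i < j → Disjoint (B i) (B j) := by
      intro i j hij
      rw [Set.disjoint_left]
      intro x hxi hxj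
      exact hxj.2 (Set.mem_biUnion (Finset.mem_range.2 (Fin.lt_iff_val_lt_val.1 hij)) hxi.1.2)
    have hBdisj : Pairwise (Function.onFun Disjoint B) := by
      intro i j hne
      rcases lt_or_gt_of_ne hne with h | h
      · exact hBlt _ _ h
      · exact (hBlt _ _ h).symm
    have hBcover : K ⊆ ⋃ j, B j := by
      intro x hx
      have hex : ∃ j, j < r ∧ ψ r x ≤ φ j x := by
        obtain ⟨j0, hj0mem, hj0eq⟩ :=
          Finset.exists_mem_eq_sup (Finset.range r) ⟨0, Finset.mem_range.2 hr⟩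
            fun j => φ j x
        exact ⟨j0, Finset.mem_range.1 hj0mem, le_of_eq hj0eq⟩
      set j1 := Nat.find hex with hj1
      obtain ⟨hj1r, hj1le⟩ := Nat.find_spec hex
      refine Set.mem_iUnion.2 ⟨⟨j1, hj1r⟩, ⟨⟨hx, hj1le⟩, ?_⟩⟩
      intro hmem
      obtain ⟨i, hi, hxi⟩ := Set.mem_iUnion₂.1 hmem
      have hi' : i < j1 := by simpa using hi
      exact Nat.find_min hex hi' ⟨hi'.trans hj1r, hxi⟩
    have hBunion : ⋃ j, B j = K :=
      le_antisymm (Set.iUnion_subset hBK) hBcover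
    have hφψ : ∀ (j : Fin r) (x : _), x ∈ B j → ψ r x = φ j.val x := by
      intro j x hx
      refine le_antisymm hx.1.2 ?_
      rw [hψ]
      exact Finset.le_sup (f := fun i => φ i x) (Finset.mem_range.2 j.isLt)
    have h1 : ∫⁻ x in K, ψ r x ∂μ = ∑ j : Fin r, ∫⁻ x in B j, φ j.val x ∂μ := by
      rw [← hBunion, lintegral_iUnion hBm hBdisj, tsum_fintype]
      exact Finset.sum_congr rfl fun j _ =>
        setLIntegral_congr_fun (hBm j) (hφψ j)
    -- inner regularity step
    apply ENNReal.le_of_forall_pos_le_add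
    intro ε hε _
    have hεr : (ε : ℝ≥0∞) / r ≠ 0 := by
      simp [ENNReal.div_eq_zero_iff, hε.ne', ENNReal.natCast_ne_top]
    have key : ∀ j : Fin r, ∃ C, C ⊆ B j ∧ IsCompact C ∧
        ∫⁻ x in B j, φ j.val x ∂μ < (∫⁻ x in C, φ j.val x ∂μ) + ε / r := by
      intro j
      set ν : Measure (Fin n → ℝ) := (μ.restrict K).withDensity (φ j.val) with hν
      have hνs : ∀ s : Set (Fin n → ℝ), MeasurableSet s → s ⊆ K →
          ν s = ∫⁻ x in s, φ j.val x ∂μ := by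
        intro s hs hsK
        rw [hν, withDensity_apply _ hs, Measure.restrict_restrict hs,
          Set.inter_eq_self_of_subset_left hsK]
      haveI : IsFiniteMeasure ν := by
        constructor
        rw [hν, withDensity_apply _ MeasurableSet.univ, Measure.restrict_univ]
        calc ∫⁻ x in K, φ j.val x ∂μ ≤ ∫⁻ x in K, ⨆ i, φ i x ∂μ :=
              lintegral_mono fun x => le_iSup (fun i => φ i x) j.val
          _ < ⊤ := hfin
      have hνB : ν (B j) ≠ ⊤ := measure_ne_top ν _
      obtain ⟨C, hCB, hCc, hlt⟩ := (hBm j).exists_isCompact_lt_add hνB hεr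
      refine ⟨C, hCB, hCc, ?_⟩
      rwa [hνs _ (hBm j) (hBK j), hνs _ hCc.measurableSet (hCB.trans (hBK j))] at hlt
    choose C hCB hCc hClt using key
    have hmem : (∑ j : Fin r, ∫⁻ x in C j, φ j.val x ∂μ) ∈ S := by
      refine ⟨r, C, hCc, fun j => (hCB j).trans (hBK j), ?_, rfl⟩
      intro i j hne
      exact (hBdisj hne).mono (hCB i) (hCB j)
    calc ∫⁻ x in K, ψ r x ∂μ = ∑ j : Fin r, ∫⁻ x in B j, φ j.val x ∂μ := h1
      _ ≤ ∑ j : Fin r, ((∫⁻ x in C j, φ j.val x ∂μ) + ε / r) :=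
          Finset.sum_le_sum fun j _ => (hClt j).le
      _ = (∑ j : Fin r, ∫⁻ x in C j, φ j.val x ∂μ) + r * ((ε : ℝ≥0∞) / r) := by
          rw [Finset.sum_add_distrib, Finset.sum_const, Finset.card_univ,
            Fintype.card_fin, nsmul_eq_mul]
      _ ≤ (∑ j : Fin r, ∫⁻ x in C j, φ j.val x ∂μ) + ε :=
          add_le_add_right ENNReal.mul_div_le _
      _ ≤ sSup S + ε := add_le_add_left (le_sSup hmem) _
  exact le_antisymm hle hge
end
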